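/- In the braid group B_4 with Garside element Δ = s_1 s_2 s_3 s_1 s_2 s_1, the element Γ = Δ s_1^{-1} s_3 satisfies Γ · 𝔯(rev(Γ)) = Δ², where 𝔯(s_i) = s_{4-i} and rev is word reversal. Moreover Γ ≠ Δ, so the equation X · 𝔯(rev(X)) = Δ² has at least two distinct solutions in B_4. -/

import Mathlib

/-- The braid relations on `n` generators `s_1, …, s_n` (indexed by `Fin n`):
far-apart generators commute and adjacent generators satisfy the braid relation. -/
def braidRels (n : ℕ) : Set (FreeGroup (Fin n)) :=
  {r | (∃ i j : Fin n, (i : ℕ) + 1 < (j : ℕ) ∧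
          r = FreeGroup.of i * FreeGroup.of j * (FreeGroup.of i)⁻¹ * (FreeGroup.of j)⁻¹) ∨
       (∃ i j : Fin n, (j : ℕ) = (i : ℕ) + 1 ∧
          r = FreeGroup.of i * FreeGroup.of j * FreeGroup.of i *
              (FreeGroup.of j * FreeGroup.of i * FreeGroup.of j)⁻¹)}

/-- The Artin braid group `B_N`, presented with generators `s_1, …, s_{N-1}`
(indexed by `Fin (N-1)`) and the braid relations. -/
abbrev BraidGroup (N : ℕ) : Type := PresentedGroup (braidRels (N - 1))

/-- The standard generator `s_{i+1}` of `B_N` (for `i : Fin (N-1)`). -/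
def braidGen {N : ℕ} (i : Fin (N - 1)) : BraidGroup N := PresentedGroup.of i

/-- The generator `s_{k+1}` of `B_N` for a natural number index, `1` out of range. -/
def braidGen' {N : ℕ} (k : ℕ) : BraidGroup N :=
  if h : k < N - 1 then braidGen ⟨k, h⟩ else 1

/-- The Garside half-twist element `Δ = (s_1)(s_2 s_1)(s_3 s_2 s_1)⋯(s_{N-1}⋯s_1)` of `B_N`. -/
def garside (N : ℕ) : BraidGroup N :=
  ((List.range (N - 1)).map
    (fun k => (((List.range (k + 1)).reverse).map (braidGen' (N := N))).prod)).prod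

namespace B4Aux

lemma mk_rel {r : FreeGroup (Fin 3)} (h : r ∈ braidRels 3) :
    PresentedGroup.mk (braidRels 3) r = 1 := by
  refine (QuotientGroup.eq_one_iff r).mpr ?_
  exact Subgroup.subset_normalClosure h

lemma mkof (i : Fin 3) :
    PresentedGroup.mk (braidRels 3) (FreeGroup.of i) = braidGen (N := 4) i := rfl

lemma rel13 : braidGen (N := 4) (0 : Fin 3) * braidGen 2 = braidGen 2 * braidGen 0 := by
  have h := mk_rel (Or.inl ⟨0, 2, by decide, rfl⟩)
  simp only [map_mul, map_inv, mkof] at h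
  calc braidGen (N := 4) (0 : Fin 3) * braidGen 2
      = braidGen (N := 4) (0 : Fin 3) * braidGen 2 * (braidGen (N := 4) (0 : Fin 3))⁻¹ *
        (braidGen (N := 4) (2 : Fin 3))⁻¹ * (braidGen 2 * braidGen 0) := by group
    _ = braidGen 2 * braidGen 0 := by rw [h, one_mul]

lemma rel121 : braidGen (N := 4) (0 : Fin 3) * braidGen 1 * braidGen 0 =
    braidGen 1 * braidGen 0 * braidGen 1 := by
  have h := mk_rel (Or.inr ⟨0, 1, by decide, rfl⟩)
  simp only [map_mul, map_inv, mkof] at h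
  calc braidGen (N := 4) (0 : Fin 3) * braidGen 1 * braidGen 0
      = braidGen (N := 4) (0 : Fin 3) * braidGen 1 * braidGen 0 *
        (braidGen (N := 4) (1 : Fin 3) * braidGen 0 * braidGen 1)⁻¹ *
        (braidGen 1 * braidGen 0 * braidGen 1) := by group
    _ = braidGen 1 * braidGen 0 * braidGen 1 := by rw [h, one_mul]

lemma rel232 : braidGen (N := 4) (1 : Fin 3) * braidGen 2 * braidGen 1 =
    braidGen 2 * braidGen 1 * braidGen 2 := by
  have h := mk_rel (Or.inr ⟨1, 2, by decide, rfl⟩)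
  simp only [map_mul, map_inv, mkof] at h
  calc braidGen (N := 4) (1 : Fin 3) * braidGen 2 * braidGen 1
      = braidGen (N := 4) (1 : Fin 3) * braidGen 2 * braidGen 1 *
        (braidGen (N := 4) (2 : Fin 3) * braidGen 1 * braidGen 2)⁻¹ *
        (braidGen 2 * braidGen 1 * braidGen 2) := by group
    _ = braidGen 2 * braidGen 1 * braidGen 2 := by rw [h, one_mul]

/-- Product of a word in the generators. -/
def W (l : List (Fin 3)) : BraidGroup 4 := (l.map (braidGen (N := 4))).prod

lemma Wstep (u x y v : List (Fin 3)) (h : W x = W y) :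
    W (u ++ (x ++ v)) = W (u ++ (y ++ v)) := by
  simp only [W, List.map_append, List.prod_append] at h ⊢
  rw [h]

lemma w_comm : W [0, 2] = W [2, 0] := by
  simp only [W, List.map_cons, List.map_nil, List.prod_cons, List.prod_nil, mul_one]
  exact rel13

lemma w_b01 : W [0, 1, 0] = W [1, 0, 1] := by
  simp only [W, List.map_cons, List.map_nil, List.prod_cons, List.prod_nil, mul_one,
    ← mul_assoc]
  exact rel121

lemma w_b12 : W [1, 2, 1] = W [2, 1, 2] := by
  simp only [W, List.map_cons, List.map_nil, List.prod_cons, List.prod_nil, mul_one,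
    ← mul_assoc]
  exact rel232

lemma key : W [0,1,2,0,1,2,0,1,2,0,1,2] = W [0,1,2,0,1,0,0,1,2,0,1,0] := by
  have h1 : W [0,1,2,0,1,2,0,1,2,0,1,2] = W [0,1,2,0,1,0,2,1,2,0,1,2] :=
    Wstep [0,1,2,0,1] [2,0] [0,2] [1,2,0,1,2] w_comm.symm
  have h2 : W [0,1,2,0,1,0,2,1,2,0,1,2] = W [0,1,2,0,1,0,2,1,0,2,1,2] :=
    Wstep [0,1,2,0,1,0,2,1] [2,0] [0,2] [1,2] w_comm.symm
  have h3 : W [0,1,2,0,1,0,2,1,0,2,1,2] = W [0,1,2,0,1,0,2,1,0,1,2,1] :=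
    Wstep [0,1,2,0,1,0,2,1,0] [2,1,2] [1,2,1] [] w_b12.symm
  have h4 : W [0,1,2,0,1,0,2,1,0,1,2,1] = W [0,1,2,0,1,0,2,0,1,0,2,1] :=
    Wstep [0,1,2,0,1,0,2] [1,0,1] [0,1,0] [2,1] w_b01.symm
  have h5 : W [0,1,2,0,1,0,2,0,1,0,2,1] = W [0,1,2,0,1,0,2,0,1,2,0,1] :=
    Wstep [0,1,2,0,1,0,2,0,1] [0,2] [2,0] [1] w_comm
  have h6 : W [0,1,2,0,1,0,2,0,1,2,0,1] = W [0,1,2,0,1,0,0,2,1,2,0,1] :=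
    Wstep [0,1,2,0,1,0] [2,0] [0,2] [1,2,0,1] w_comm.symm
  have h7 : W [0,1,2,0,1,0,0,2,1,2,0,1] = W [0,1,2,0,1,0,0,1,2,1,0,1] :=
    Wstep [0,1,2,0,1,0,0] [2,1,2] [1,2,1] [0,1] w_b12.symm
  have h8 : W [0,1,2,0,1,0,0,1,2,1,0,1] = W [0,1,2,0,1,0,0,1,2,0,1,0] :=
    Wstep [0,1,2,0,1,0,0,1,2] [1,0,1] [0,1,0] [] w_b01.symm
  exact h1.trans (h2.trans (h3.trans (h4.trans (h5.trans (h6.trans (h7.trans h8))))))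

/-- Separating homomorphism to `S₄`. -/
noncomputable def φ : BraidGroup 4 →* Equiv.Perm (Fin 4) :=
  PresentedGroup.toGroup (f := fun i : Fin 3 => Equiv.swap i.castSucc i.succ)
    (by
      intro r hr
      rcases hr with ⟨i, j, hij, rfl⟩ | ⟨i, j, hij, rfl⟩ <;>
        simp only [map_mul, map_inv, FreeGroup.lift_apply_of] <;> revert hij <;> revert i j <;> decide)

lemma φ_gen (i : Fin 3) : φ (braidGen (N := 4) i) = Equiv.swap i.castSucc i.succ :=
  PresentedGroup.toGroup.of _

lemma gen_ne : braidGen (N := 4) (0 : Fin 3) ≠ braidGen (N := 4) (2 : Fin 3) := by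
  intro h
  have h2 := congrArg φ h
  rw [φ_gen, φ_gen] at h2
  exact absurd h2 (by decide)

end B4Aux

/-- In `B_4`, with `Δ = s₁s₂s₃s₁s₂s₁` and `Γ = Δ s₁⁻¹ s₃`, one has
`Γ · 𝔯(rev Γ) = Δ²` and `Γ ≠ Δ`; hence `X · 𝔯(rev X) = Δ²` has at least two distinct
solutions in `B_4`. -/
theorem b4_two_solutions
    (rev : BraidGroup 4 → BraidGroup 4)
    (hrev_anti : ∀ g h : BraidGroup 4, rev (g * h) = rev h * rev g)
    (hrev_gen : ∀ i : Fin 3, rev (braidGen (N := 4) i) = braidGen i)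
    (R : BraidGroup 4 →* BraidGroup 4)
    (hR : ∀ i : Fin 3, R (braidGen (N := 4) i) = braidGen i.rev) :
    let s₁ : BraidGroup 4 := braidGen (0 : Fin 3)
    let s₂ : BraidGroup 4 := braidGen (1 : Fin 3)
    let s₃ : BraidGroup 4 := braidGen (2 : Fin 3)
    let Δ : BraidGroup 4 := s₁ * s₂ * s₃ * s₁ * s₂ * s₁
    let Γ : BraidGroup 4 := Δ * s₁⁻¹ * s₃
    Γ * R (rev Γ) = Δ ^ 2 ∧ Γ ≠ Δ := by
  intro s₁ s₂ s₃ Δ Γ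
  have hrev1 : rev 1 = 1 := by
    have h := hrev_anti 1 1
    rw [one_mul] at h
    exact (mul_eq_left.mp h.symm)
  have hrevinv : ∀ g : BraidGroup 4, rev g⁻¹ = (rev g)⁻¹ := by
    intro g
    have h := hrev_anti g g⁻¹
    rw [mul_inv_cancel, hrev1] at h
    exact eq_inv_of_mul_eq_one_left h.symm
  have hr0 : Fin.rev (0 : Fin 3) = 2 := by decide
  have hr1 : Fin.rev (1 : Fin 3) = 1 := by decide
  have hr2 : Fin.rev (2 : Fin 3) = 0 := by decide
  constructor
  · have hrg : rev Γ = braidGen (N := 4) (2 : Fin 3) * braidGen 1 * braidGen 0 *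
        braidGen 2 * braidGen 1 * braidGen 0 := by
      show rev (braidGen (N := 4) (0 : Fin 3) * braidGen 1 * braidGen 2 * braidGen 0 *
        braidGen 1 * braidGen 0 * (braidGen (N := 4) (0 : Fin 3))⁻¹ * braidGen 2) = _
      simp only [hrev_anti, hrevinv, hrev_gen]
      group
    have hRg : R (rev Γ) = braidGen (N := 4) (0 : Fin 3) * braidGen 1 * braidGen 2 *
        braidGen 0 * braidGen 1 * braidGen 2 := by
      rw [hrg]
      simp only [map_mul, hR, hr0, hr1, hr2]
    have keyAB := B4Aux.key
    simp only [B4Aux.W, List.map_cons, List.map_nil, List.prod_cons, List.prod_nil,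
      mul_one] at keyAB
    show Γ * R (rev Γ) = Δ ^ 2
    rw [hRg]
    show braidGen (N := 4) (0 : Fin 3) * braidGen 1 * braidGen 2 * braidGen 0 *
        braidGen 1 * braidGen 0 * (braidGen (N := 4) (0 : Fin 3))⁻¹ * braidGen 2 *
        (braidGen (N := 4) (0 : Fin 3) * braidGen 1 * braidGen 2 * braidGen 0 *
        braidGen 1 * braidGen 2) =
      (braidGen (N := 4) (0 : Fin 3) * braidGen 1 * braidGen 2 * braidGen 0 *
        braidGen 1 * braidGen 0) ^ 2
    refine Eq.trans (by group) (keyAB.trans ?_)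
    rw [sq]
    group
  · intro h
    have h3 : braidGen (N := 4) (2 : Fin 3) = braidGen (N := 4) (0 : Fin 3) := by
      have hh : Δ * s₁⁻¹ * s₃ = Δ := h
      calc braidGen (N := 4) (2 : Fin 3) = s₃ := rfl
        _ = (Δ * s₁⁻¹)⁻¹ * (Δ * s₁⁻¹ * s₃) := by group
        _ = (Δ * s₁⁻¹)⁻¹ * Δ := by rw [hh]
        _ = s₁ := by group
        _ = braidGen (N := 4) (0 : Fin 3) := rfl
    exact B4Aux.gen_ne h3.symm
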